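/- At the optimal discriminator, the GAN value function equals 2·JSD(p_data ‖ p_g) − log 4, where JSD is the Jensen–Shannon divergence; in particular the value is minimized, equal to −log 4, exactly when p_data = p_g. -/

import Mathlib

open Finset

private lemma kl_term_aux (a b : ℝ) (ha : 0 ≤ a) (hb : 0 ≤ b) (h : a ≠ 0 → b ≠ 0) :
    a - b ≤ a * Real.log (a / b) ∧ (a ≠ b → a - b < a * Real.log (a / b)) := by
  rcases eq_or_lt_of_le ha with h0 | h0
  · constructor
    · simp [← h0]; linarith
    · intro hne
      have hbpos : 0 < b := lt_of_le_of_ne hb (by simpa [← h0] using hne.symm ∘ Eq.symm)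
      simp [← h0]; linarith
  · have hbpos : 0 < b := lt_of_le_of_ne hb (fun hh => h (ne_of_gt h0) hh.symm)
    have hlog : Real.log (b / a) ≤ b / a - 1 :=
      Real.log_le_sub_one_of_pos (div_pos hbpos h0)
    have key : ∀ hne : a ≠ b, Real.log (b / a) < b / a - 1 := by
      intro hne
      exact Real.log_lt_sub_one_of_pos (div_pos hbpos h0)
        (fun hh => hne ((div_eq_one_iff_eq (ne_of_gt h0)).mp hh).symm)
    have hrw : Real.log (a / b) = -Real.log (b / a) := by
      rw [← Real.log_inv, inv_div]
    constructor
    · rw [hrw]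
      have := mul_le_mul_of_nonneg_left hlog (le_of_lt h0)
      have hba : a * (b / a - 1) = b - a := by field_simp
      nlinarith [this]
    · intro hne
      rw [hrw]
      have := mul_lt_mul_of_pos_left (key hne) h0
      have hba : a * (b / a - 1) = b - a := by field_simp
      nlinarith [this]

private lemma gibbs {α : Type*} [Fintype α] (p m : α → ℝ)
    (hp : ∀ x, 0 ≤ p x) (hm : ∀ x, 0 ≤ m x) (h : ∀ x, p x ≠ 0 → m x ≠ 0)
    (hp1 : ∑ x, p x = 1) (hm1 : ∑ x, m x = 1) :
    0 ≤ ∑ x, p x * Real.log (p x / m x) ∧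
      ((∑ x, p x * Real.log (p x / m x)) = 0 → p = m) := by
  have hpt : ∀ x : α, p x - m x ≤ p x * Real.log (p x / m x) := fun x =>
    (kl_term_aux (p x) (m x) (hp x) (hm x) (h x)).1
  have hsum : (0:ℝ) ≤ ∑ x, p x * Real.log (p x / m x) := by
    have h2 : ∑ x, (p x - m x) ≤ ∑ x, p x * Real.log (p x / m x) :=
      Finset.sum_le_sum (fun x _ => hpt x)
    rw [Finset.sum_sub_distrib, hp1, hm1] at h2
    linarith
  refine ⟨hsum, ?_⟩
  intro hzero
  by_contra hne
  obtain ⟨x0, hx0⟩ := Function.ne_iff.mp hne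
  have hstrict : ∑ x, (p x - m x) < ∑ x, p x * Real.log (p x / m x) := by
    apply Finset.sum_lt_sum (fun x _ => hpt x)
    exact ⟨x0, Finset.mem_univ x0, (kl_term_aux (p x0) (m x0) (hp x0) (hm x0) (h x0)).2 hx0⟩
  rw [Finset.sum_sub_distrib, hp1, hm1, hzero] at hstrict
  linarith

theorem gan_value_JSD {α : Type*} [Fintype α] (p q : α → ℝ)
    (hp : ∀ x, 0 ≤ p x) (hq : ∀ x, 0 ≤ q x)
    (hp1 : ∑ x, p x = 1) (hq1 : ∑ x, q x = 1)
    (C JSD : ℝ)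
    (hC : C = ∑ x, p x * Real.log (p x / (p x + q x)) +
              ∑ x, q x * Real.log (q x / (p x + q x)))
    (hJSD : JSD = (1 / 2) * ∑ x, p x * Real.log (p x / ((p x + q x) / 2)) +
                  (1 / 2) * ∑ x, q x * Real.log (q x / ((p x + q x) / 2))) :
    C = 2 * JSD - Real.log 4 ∧ (-Real.log 4 ≤ C) ∧ (C = -Real.log 4 ↔ p = q) := by
  set m : α → ℝ := fun x => (p x + q x) / 2 with hm_def
  have hm : ∀ x, 0 ≤ m x := fun x => by
    have := hp x; have := hq x; simp only [hm_def]; linarith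
  have hm1 : ∑ x, m x = 1 := by
    simp only [hm_def, ← Finset.sum_div, Finset.sum_add_distrib, hp1, hq1]
    norm_num
  have hpm : ∀ x, p x ≠ 0 → m x ≠ 0 := fun x hx => by
    have h1 : 0 < p x := lt_of_le_of_ne (hp x) (Ne.symm hx)
    have := hq x
    simp only [hm_def]; positivity
  have hqm : ∀ x, q x ≠ 0 → m x ≠ 0 := fun x hx => by
    have h1 : 0 < q x := lt_of_le_of_ne (hq x) (Ne.symm hx)
    have := hp x
    simp only [hm_def]; positivity
  -- termwise log identity
  have hterm : ∀ (f : α → ℝ), (∀ x, 0 ≤ f x) → (∀ x, f x ≠ 0 → p x + q x ≠ 0) →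
      ∀ x, f x * Real.log (f x / ((p x + q x) / 2)) =
        f x * Real.log (f x / (p x + q x)) + f x * Real.log 2 := by
    intro f hf hfpq x
    rcases eq_or_lt_of_le (hf x) with h0 | h0
    · simp [← h0]
    · have hpq : (0:ℝ) < p x + q x :=
        lt_of_le_of_ne (by have := hp x; have := hq x; linarith) (Ne.symm (hfpq x (ne_of_gt h0)))
      have : f x / ((p x + q x) / 2) = 2 * (f x / (p x + q x)) := by field_simp
      rw [this, Real.log_mul two_ne_zero (ne_of_gt (div_pos h0 hpq))]
      ring
  have hfpq : ∀ x, p x ≠ 0 → p x + q x ≠ 0 := fun x hx => by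
    have := lt_of_le_of_ne (hp x) (Ne.symm hx); have := hq x; positivity
  have hgpq : ∀ x, q x ≠ 0 → p x + q x ≠ 0 := fun x hx => by
    have := lt_of_le_of_ne (hq x) (Ne.symm hx); have := hp x; positivity
  have hsum_p : ∑ x, p x * Real.log (p x / ((p x + q x) / 2)) =
      (∑ x, p x * Real.log (p x / (p x + q x))) + Real.log 2 := by
    rw [Finset.sum_congr rfl (fun x _ => hterm p hp hfpq x), Finset.sum_add_distrib,
      ← Finset.sum_mul, hp1, one_mul]
  have hsum_q : ∑ x, q x * Real.log (q x / ((p x + q x) / 2)) =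
      (∑ x, q x * Real.log (q x / (p x + q x))) + Real.log 2 := by
    rw [Finset.sum_congr rfl (fun x _ => hterm q hq hgpq x), Finset.sum_add_distrib,
      ← Finset.sum_mul, hq1, one_mul]
  have hlog4 : Real.log 4 = 2 * Real.log 2 := by
    rw [show (4:ℝ) = 2 ^ 2 by norm_num, Real.log_pow]; push_cast; ring
  have heq : C = 2 * JSD - Real.log 4 := by
    rw [hC, hJSD, hsum_p, hsum_q, hlog4]; ring
  have hKLp := gibbs p m hp hm hpm hp1 hm1
  have hKLq := gibbs q m hq hm hqm hq1 hm1
  have hJSD_eq : JSD = (1/2) * (∑ x, p x * Real.log (p x / m x)) +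
      (1/2) * (∑ x, q x * Real.log (q x / m x)) := by rw [hJSD]
  have hJSD_nonneg : 0 ≤ JSD := by rw [hJSD_eq]; nlinarith [hKLp.1, hKLq.1]
  refine ⟨heq, by linarith [hJSD_nonneg, heq.ge, heq.le], ?_⟩
  constructor
  · intro hCeq
    have hJ0 : JSD = 0 := by nlinarith [heq]
    have hp0 : (∑ x, p x * Real.log (p x / m x)) = 0 := by
      rw [hJSD_eq] at hJ0; nlinarith [hKLp.1, hKLq.1]
    have hq0 : (∑ x, q x * Real.log (q x / m x)) = 0 := by
      rw [hJSD_eq] at hJ0; nlinarith [hKLp.1, hKLq.1]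
    rw [hKLp.2 hp0, hKLq.2 hq0]
  · intro hpq_eq
    subst hpq_eq
    have : ∀ x, p x * Real.log (p x / ((p x + p x) / 2)) = 0 := by
      intro x
      rcases eq_or_lt_of_le (hp x) with h0 | h0
      · simp [← h0]
      · have h2 : (p x + p x) / 2 = p x := by ring
        simp [h2, div_self (ne_of_gt h0)]
    have hJ0 : JSD = 0 := by
      rw [hJSD, Finset.sum_congr rfl (fun x _ => this x)]; simp
    rw [heq, hJ0]; ring
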